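/- Let u, v, w ∈ ℤ² be primitive vectors such that x := det(v,w), y := det(w,u), and z := det(u,v) are all positive, let α, β, γ ∈ ℚ, and suppose the set T := {a ∈ ℝ² : ⟨u,a⟩ ≤ α, ⟨v,a⟩ ≤ β, ⟨w,a⟩ ≤ γ} has nonempty interior (so T is a rational triangle with outer edge normals u, v, w). Then the edge E := {a ∈ T : ⟨u,a⟩ = α} of T has Euclidean length equal to ((αx + βy + γz)/(xyz)) · x · ‖u‖; equivalently, its lattice length (Euclidean length divided by the Euclidean length of a primitive lattice vector parallel to E) equals ((αx + βy + γz) · x)/(xyz). -/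

import Mathlib

open Set

/-- The standard inner product on ℝ². -/
def dotR (u a : ℝ × ℝ) : ℝ := u.1 * a.1 + u.2 * a.2

/-- The coercion of an integer point of the plane to a real point. -/
def zpt (v : ℤ × ℤ) : ℝ × ℝ := ((v.1 : ℝ), (v.2 : ℝ))

lemma halfplane_strict (n1 n2 c : ℝ) (hn : 0 < n1 ^ 2 + n2 ^ 2) (a₀ : ℝ × ℝ)
    (ε : ℝ) (hε : 0 < ε)
    (hb : ∀ b : ℝ × ℝ, dist b a₀ < ε → n1 * b.1 + n2 * b.2 ≤ c) :
    n1 * a₀.1 + n2 * a₀.2 < c := by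
  set M := |n1| + |n2| + 1 with hMd
  have hM : 0 < M := by positivity
  set δ := ε / (2 * M) with hδd
  have hδ : 0 < δ := by positivity
  have habs1 : |n1| < 2 * M := by
    have := abs_nonneg n2; nlinarith [abs_nonneg n1]
  have habs2 : |n2| < 2 * M := by
    have := abs_nonneg n1; nlinarith [abs_nonneg n2]
  have key : ∀ m : ℝ, |m| < 2 * M → dist (a₀.1 + δ * m) a₀.1 < ε := by
    intro m hm
    have h1 : a₀.1 + δ * m - a₀.1 = δ * m := by ring
    rw [Real.dist_eq, h1, abs_mul, abs_of_pos hδ, hδd]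
    rw [div_mul_eq_mul_div, div_lt_iff₀ (by positivity)]
    nlinarith [abs_nonneg m]
  have hd : dist ((a₀.1 + δ * n1, a₀.2 + δ * n2) : ℝ × ℝ) a₀ < ε := by
    rw [Prod.dist_eq]
    apply max_lt (key n1 habs1)
    have h1 : a₀.2 + δ * n2 - a₀.2 = δ * n2 := by ring
    rw [Real.dist_eq, h1, abs_mul, abs_of_pos hδ, hδd]
    rw [div_mul_eq_mul_div, div_lt_iff₀ (by positivity)]
    nlinarith [abs_nonneg n2]
  have hle := hb _ hd
  simp only at hle
  nlinarith [mul_pos hδ hn]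

set_option maxHeartbeats 1600000 in
lemma triangle_edge_aux (U1 U2 V1 V2 W1 W2 A B G : ℝ)
    (hX : 0 < V1 * W2 - V2 * W1)
    (hY : 0 < W1 * U2 - W2 * U1)
    (hZ : 0 < U1 * V2 - U2 * V1)
    (T : Set (ℝ × ℝ))
    (hT : T = {a : ℝ × ℝ | U1 * a.1 + U2 * a.2 ≤ A ∧ V1 * a.1 + V2 * a.2 ≤ B ∧
        W1 * a.1 + W2 * a.2 ≤ G})
    (hne : (interior T).Nonempty)
    (E : Set (ℝ × ℝ)) (hE : E = {a ∈ T | U1 * a.1 + U2 * a.2 = A}) :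
    ∃ p q : ℝ × ℝ, E = segment ℝ p q ∧
      Real.sqrt ((p.1 - q.1) ^ 2 + (p.2 - q.2) ^ 2) =
        ((A * (V1 * W2 - V2 * W1) + B * (W1 * U2 - W2 * U1) + G * (U1 * V2 - U2 * V1)) /
            ((V1 * W2 - V2 * W1) * (W1 * U2 - W2 * U1) * (U1 * V2 - U2 * V1))) *
          (V1 * W2 - V2 * W1) * Real.sqrt (U1 ^ 2 + U2 ^ 2) := by
  subst hT hE
  have hX0 : V1 * W2 - V2 * W1 ≠ 0 := ne_of_gt hX
  have hY0 : W1 * U2 - W2 * U1 ≠ 0 := ne_of_gt hY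
  have hZ0 : U1 * V2 - U2 * V1 ≠ 0 := ne_of_gt hZ
  have hU : 0 < U1 ^ 2 + U2 ^ 2 := by
    nlinarith [mul_pos hZ hZ, sq_nonneg (U1 * V1 + U2 * V2),
      add_nonneg (sq_nonneg V1) (sq_nonneg V2)]
  have hV : 0 < V1 ^ 2 + V2 ^ 2 := by
    nlinarith [mul_pos hZ hZ, sq_nonneg (U1 * V1 + U2 * V2),
      add_nonneg (sq_nonneg U1) (sq_nonneg U2)]
  have hW : 0 < W1 ^ 2 + W2 ^ 2 := by
    nlinarith [mul_pos hX hX, sq_nonneg (V1 * W1 + V2 * W2),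
      add_nonneg (sq_nonneg V1) (sq_nonneg V2)]
  obtain ⟨a₀, ha₀⟩ := hne
  rw [mem_interior_iff_mem_nhds, Metric.mem_nhds_iff] at ha₀
  obtain ⟨ε, hε, hball⟩ := ha₀
  have hball' : ∀ b : ℝ × ℝ, dist b a₀ < ε → b ∈ {a : ℝ × ℝ |
      U1 * a.1 + U2 * a.2 ≤ A ∧ V1 * a.1 + V2 * a.2 ≤ B ∧ W1 * a.1 + W2 * a.2 ≤ G} :=
    fun b hb => hball (Metric.mem_ball.mpr hb)
  have hsu : U1 * a₀.1 + U2 * a₀.2 < A :=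
    halfplane_strict U1 U2 A hU a₀ ε hε (fun b hb => (hball' b hb).1)
  have hsv : V1 * a₀.1 + V2 * a₀.2 < B :=
    halfplane_strict V1 V2 B hV a₀ ε hε (fun b hb => (hball' b hb).2.1)
  have hsw : W1 * a₀.1 + W2 * a₀.2 < G :=
    halfplane_strict W1 W2 G hW a₀ ε hε (fun b hb => (hball' b hb).2.2)
  have hid : ∀ b : ℝ × ℝ, (V1 * W2 - V2 * W1) * (U1 * b.1 + U2 * b.2)
      + (W1 * U2 - W2 * U1) * (V1 * b.1 + V2 * b.2)
      + (U1 * V2 - U2 * V1) * (W1 * b.1 + W2 * b.2) = 0 := fun b => by ring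
  have hS : 0 < A * (V1 * W2 - V2 * W1) + B * (W1 * U2 - W2 * U1)
      + G * (U1 * V2 - U2 * V1) := by
    nlinarith [hid a₀, mul_pos hX (sub_pos.2 hsu), mul_pos hY (sub_pos.2 hsv),
      mul_pos hZ (sub_pos.2 hsw)]
  have hS0 : A * (V1 * W2 - V2 * W1) + B * (W1 * U2 - W2 * U1)
      + G * (U1 * V2 - U2 * V1) ≠ 0 := ne_of_gt hS
  refine ⟨((A * V2 - B * U2) / (U1 * V2 - U2 * V1), (B * U1 - A * V1) / (U1 * V2 - U2 * V1)),
    ((G * U2 - A * W2) / (W1 * U2 - W2 * U1), (A * W1 - G * U1) / (W1 * U2 - W2 * U1)),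
    ?_, ?_⟩
  · ext a
    simp only [Set.mem_setOf_eq, segment, Set.mem_sep_iff]
    constructor
    · rintro ⟨⟨hua, hva, hwa⟩, heq⟩
      set V := V1 * a.1 + V2 * a.2 with hVd
      set t := (W1 * U2 - W2 * U1) * (B - V) /
        (A * (V1 * W2 - V2 * W1) + B * (W1 * U2 - W2 * U1) + G * (U1 * V2 - U2 * V1)) with htd
      have ht0 : 0 ≤ t := div_nonneg (mul_nonneg hY.le (sub_nonneg.2 hva)) hS.le
      have ht1 : t ≤ 1 := by
        rw [htd, div_le_one hS]
        nlinarith [mul_le_mul_of_nonneg_left hwa hZ.le]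
      have ha1 : a.1 = (A * V2 - V * U2) / (U1 * V2 - U2 * V1) := by
        rw [hVd]; field_simp (disch := first | (intro h; linarith) | linarith); linear_combination V2 * heq
      have ha2 : a.2 = (V * U1 - A * V1) / (U1 * V2 - U2 * V1) := by
        rw [hVd]; field_simp (disch := first | (intro h; linarith) | linarith); linear_combination (-V1) * heq
      refine ⟨1 - t, t, by linarith, ht0, by ring, ?_⟩
      apply Prod.ext
      · simp only [Prod.fst_add, Prod.smul_fst, smul_eq_mul]
        rw [ha1, htd]
        field_simp (disch := first | (intro h; linarith) | linarith)
        ring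
      · simp only [Prod.snd_add, Prod.smul_snd, smul_eq_mul]
        rw [ha2, htd]
        field_simp (disch := first | (intro h; linarith) | linarith)
        ring
    · rintro ⟨c, d, hc, hd, hcd, rfl⟩
      have hc' : c = 1 - d := by linarith
      subst hc'
      have hd1 : d ≤ 1 := by linarith
      simp only [Prod.fst_add, Prod.smul_fst, Prod.snd_add, Prod.smul_snd, smul_eq_mul]
      refine ⟨⟨?_, ?_, ?_⟩, ?_⟩
      · have : U1 * ((1 - d) * ((A * V2 - B * U2) / (U1 * V2 - U2 * V1)) +
            d * ((G * U2 - A * W2) / (W1 * U2 - W2 * U1))) +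
            U2 * ((1 - d) * ((B * U1 - A * V1) / (U1 * V2 - U2 * V1)) +
            d * ((A * W1 - G * U1) / (W1 * U2 - W2 * U1))) = A := by
          field_simp (disch := first | (intro h; linarith) | linarith); ring
        rw [this]
      · have : V1 * ((1 - d) * ((A * V2 - B * U2) / (U1 * V2 - U2 * V1)) +
            d * ((G * U2 - A * W2) / (W1 * U2 - W2 * U1))) +
            V2 * ((1 - d) * ((B * U1 - A * V1) / (U1 * V2 - U2 * V1)) +
            d * ((A * W1 - G * U1) / (W1 * U2 - W2 * U1))) = B - d *
            ((A * (V1 * W2 - V2 * W1) + B * (W1 * U2 - W2 * U1) + G * (U1 * V2 - U2 * V1)) /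
              (W1 * U2 - W2 * U1)) := by
          field_simp (disch := first | (intro h; linarith) | linarith); ring
        rw [this]
        have : 0 ≤ d * ((A * (V1 * W2 - V2 * W1) + B * (W1 * U2 - W2 * U1) +
            G * (U1 * V2 - U2 * V1)) / (W1 * U2 - W2 * U1)) :=
          mul_nonneg hd (div_nonneg hS.le hY.le)
        linarith
      · have : W1 * ((1 - d) * ((A * V2 - B * U2) / (U1 * V2 - U2 * V1)) +
            d * ((G * U2 - A * W2) / (W1 * U2 - W2 * U1))) +
            W2 * ((1 - d) * ((B * U1 - A * V1) / (U1 * V2 - U2 * V1)) +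
            d * ((A * W1 - G * U1) / (W1 * U2 - W2 * U1))) = G - (1 - d) *
            ((A * (V1 * W2 - V2 * W1) + B * (W1 * U2 - W2 * U1) + G * (U1 * V2 - U2 * V1)) /
              (U1 * V2 - U2 * V1)) := by
          field_simp (disch := first | (intro h; linarith) | linarith); ring
        rw [this]
        have : 0 ≤ (1 - d) * ((A * (V1 * W2 - V2 * W1) + B * (W1 * U2 - W2 * U1) +
            G * (U1 * V2 - U2 * V1)) / (U1 * V2 - U2 * V1)) :=
          mul_nonneg (by linarith) (div_nonneg hS.le hZ.le)
        linarith
      · field_simp (disch := first | (intro h; linarith) | linarith); ring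
  · dsimp only
    have key : ((A * V2 - B * U2) / (U1 * V2 - U2 * V1) -
          (G * U2 - A * W2) / (W1 * U2 - W2 * U1)) ^ 2 +
        ((B * U1 - A * V1) / (U1 * V2 - U2 * V1) -
          (A * W1 - G * U1) / (W1 * U2 - W2 * U1)) ^ 2 =
        ((A * (V1 * W2 - V2 * W1) + B * (W1 * U2 - W2 * U1) + G * (U1 * V2 - U2 * V1)) /
          ((W1 * U2 - W2 * U1) * (U1 * V2 - U2 * V1))) ^ 2 * (U1 ^ 2 + U2 ^ 2) := by
      field_simp (disch := first | (intro h; linarith) | linarith)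
      ring
    rw [key, Real.sqrt_mul (sq_nonneg _), Real.sqrt_sq
      (div_nonneg hS.le (mul_pos hY hZ).le)]
    have h2 : (A * (V1 * W2 - V2 * W1) + B * (W1 * U2 - W2 * U1) + G * (U1 * V2 - U2 * V1)) /
          ((W1 * U2 - W2 * U1) * (U1 * V2 - U2 * V1)) =
        ((A * (V1 * W2 - V2 * W1) + B * (W1 * U2 - W2 * U1) + G * (U1 * V2 - U2 * V1)) /
            ((V1 * W2 - V2 * W1) * (W1 * U2 - W2 * U1) * (U1 * V2 - U2 * V1))) *
          (V1 * W2 - V2 * W1) := by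
      field_simp (disch := first | (intro h; linarith) | linarith)
    rw [h2]

theorem stmt_15 (u v w : ℤ × ℤ)
    (hu : IsCoprime u.1 u.2) (hv : IsCoprime v.1 v.2) (hw : IsCoprime w.1 w.2)
    (x y z : ℤ)
    (hxd : x = v.1 * w.2 - v.2 * w.1)
    (hyd : y = w.1 * u.2 - w.2 * u.1)
    (hzd : z = u.1 * v.2 - u.2 * v.1)
    (hx : 0 < x) (hy : 0 < y) (hz : 0 < z)
    (α β γ : ℚ) (T : Set (ℝ × ℝ))
    (hT : T = {a : ℝ × ℝ | dotR (zpt u) a ≤ (α : ℝ) ∧ dotR (zpt v) a ≤ (β : ℝ) ∧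
      dotR (zpt w) a ≤ (γ : ℝ)})
    (hne : (interior T).Nonempty)
    (E : Set (ℝ × ℝ)) (hE : E = {a ∈ T | dotR (zpt u) a = (α : ℝ)}) :
    ∃ p q : ℝ × ℝ, E = segment ℝ p q ∧
      Real.sqrt ((p.1 - q.1) ^ 2 + (p.2 - q.2) ^ 2) =
        (((α : ℝ) * (x : ℝ) + (β : ℝ) * (y : ℝ) + (γ : ℝ) * (z : ℝ)) /
            ((x : ℝ) * (y : ℝ) * (z : ℝ))) * (x : ℝ) *
          Real.sqrt ((u.1 : ℝ) ^ 2 + (u.2 : ℝ) ^ 2) := by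
  have hX : (0 : ℝ) < (v.1 : ℝ) * (w.2 : ℝ) - (v.2 : ℝ) * (w.1 : ℝ) := by
    have := hx; rw [hxd] at this; exact_mod_cast this
  have hY : (0 : ℝ) < (w.1 : ℝ) * (u.2 : ℝ) - (w.2 : ℝ) * (u.1 : ℝ) := by
    have := hy; rw [hyd] at this; exact_mod_cast this
  have hZ : (0 : ℝ) < (u.1 : ℝ) * (v.2 : ℝ) - (u.2 : ℝ) * (v.1 : ℝ) := by
    have := hz; rw [hzd] at this; exact_mod_cast this
  have hT' : T = {a : ℝ × ℝ | (u.1 : ℝ) * a.1 + (u.2 : ℝ) * a.2 ≤ (α : ℝ) ∧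
      (v.1 : ℝ) * a.1 + (v.2 : ℝ) * a.2 ≤ (β : ℝ) ∧
      (w.1 : ℝ) * a.1 + (w.2 : ℝ) * a.2 ≤ (γ : ℝ)} := hT
  have hE' : E = {a ∈ T | (u.1 : ℝ) * a.1 + (u.2 : ℝ) * a.2 = (α : ℝ)} := hE
  obtain ⟨p, q, h1, h2⟩ := triangle_edge_aux (u.1 : ℝ) (u.2 : ℝ) (v.1 : ℝ) (v.2 : ℝ)
    (w.1 : ℝ) (w.2 : ℝ) (α : ℝ) (β : ℝ) (γ : ℝ) hX hY hZ T hT' hne E hE'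
  refine ⟨p, q, h1, ?_⟩
  rw [hxd, hyd, hzd]
  push_cast
  linear_combination h2
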